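/- Let a < b be real numbers, let 1 ≤ p < ∞, and let u : [a, b] → ℝ be twice continuously differentiable on [a, b]. Then for every ε with 0 < ε ≤ b − a, ‖u′‖_{L^p(a,b)} ≤ ε · ‖u″‖_{L^p(a,b)} + 36 · ε^{−1} · ‖u‖_{L^p(a,b)}. -/

import Mathlib

open MeasureTheory Set intervalIntegral
open scoped ENNReal


lemma my_ptwise (a b : ℝ) (u u' u'' : ℝ → ℝ)
    (hu : ContinuousOn u (Icc a b)) (hU' : ContinuousOn u' (Icc a b))
    (hU'' : ContinuousOn u'' (Icc a b))
    (hd'' : ∀ x ∈ Icc a b, HasDerivWithinAt u' (u'' x) (Icc a b) x)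
    (h : ℝ) (hh : 0 < h) (c : ℝ) (hac : a ≤ c) (hcb : c + h ≤ b)
    (x : ℝ) (hx : x ∈ Icc c (c + h))
    (hd' : ∀ x ∈ Icc a b, HasDerivWithinAt u (u' x) (Icc a b) x) :
    |u' x| ≤ 9 / h ^ 2 * (∫ t in Icc c (c + h), |u t|) + ∫ t in Icc c (c + h), |u'' t| := by
  have hsub : Icc c (c + h) ⊆ Icc a b := Icc_subset_Icc hac hcb
  have hxab : x ∈ Icc a b := hsub hx
  have h1sub : Icc c (c + h/3) ⊆ Icc c (c + h) := Icc_subset_Icc le_rfl (by linarith)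
  have h2sub : Icc (c + 2*h/3) (c + h) ⊆ Icc c (c + h) := Icc_subset_Icc (by linarith) le_rfl
  obtain ⟨y, hyJ, hymin⟩ := isCompact_Icc.exists_isMinOn (nonempty_Icc.2 (by linarith))
    ((hu.mono (h1sub.trans hsub)).abs)
  obtain ⟨z, hzJ, hzmin⟩ := isCompact_Icc.exists_isMinOn (nonempty_Icc.2 (by linarith))
    ((hu.mono (h2sub.trans hsub)).abs)
  have hIu : IntegrableOn (fun t => |u t|) (Icc c (c+h)) := ((hu.mono hsub).abs).integrableOn_Icc
  have hIu'' : IntegrableOn (fun t => |u'' t|) (Icc c (c+h)) :=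
    ((hU''.mono hsub).abs).integrableOn_Icc
  have hy1 : h/3 * |u y| ≤ ∫ t in Icc c (c + h/3), |u t| := by
    have h1 := setIntegral_mono_on (integrableOn_const (by simp [Real.volume_Icc]))
      (hIu.mono_set h1sub) measurableSet_Icc (fun t ht => hymin ht)
    rw [setIntegral_const, smul_eq_mul,
      Real.volume_real_Icc_of_le (by linarith : c ≤ c + h/3)] at h1
    have he : c + h/3 - c = h/3 := by ring
    rwa [he] at h1
  have hz1 : h/3 * |u z| ≤ ∫ t in Icc (c + 2*h/3) (c + h), |u t| := by
    have h1 := setIntegral_mono_on (integrableOn_const (by simp [Real.volume_Icc]))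
      (hIu.mono_set h2sub) measurableSet_Icc (fun t ht => hzmin ht)
    rw [setIntegral_const, smul_eq_mul,
      Real.volume_real_Icc_of_le (by linarith : c + 2*h/3 ≤ c + h)] at h1
    have he : c + h - (c + 2*h/3) = h/3 := by ring
    rwa [he] at h1
  have hyab : y ∈ Icc a b := hsub (h1sub hyJ)
  have hzab : z ∈ Icc a b := hsub (h2sub hzJ)
  have hyz : y + h/3 ≤ z := by
    have := hyJ.2; have := hzJ.1; linarith
  set M : ℝ := ∫ t in Icc c (c + h), |u'' t| with hM
  have hM0 : 0 ≤ M := setIntegral_nonneg measurableSet_Icc (fun t _ => abs_nonneg _)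
  -- |u' t - u' x| ≤ M for t in the window
  have key1 : ∀ t ∈ Icc c (c + h), |u' t - u' x| ≤ M := by
    intro t ht
    have htab : t ∈ Icc a b := hsub ht
    have hftc : ∫ s in x..t, u'' s = u' t - u' x := by
      apply integral_eq_sub_of_hasDeriv_right
      · exact hU'.mono (uIcc_subset_Icc hxab htab)
      · intro s hs
        have hsab : s ∈ Ioo a b := ⟨lt_of_le_of_lt (le_min hxab.1 htab.1) hs.1,
          lt_of_lt_of_le hs.2 (max_le hxab.2 htab.2)⟩
        exact ((hd'' s (Ioo_subset_Icc_self hsab)).hasDerivAt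
          (Icc_mem_nhds hsab.1 hsab.2)).hasDerivWithinAt
      · exact (hU''.mono (uIcc_subset_Icc hxab htab)).intervalIntegrable
    rw [← hftc]
    calc |∫ s in x..t, u'' s| ≤ ∫ s in Set.uIoc x t, |u'' s| := by
          simpa using norm_integral_le_integral_norm_uIoc (f := u'') (a := x) (b := t) (μ := volume)
      _ ≤ M := by
          apply setIntegral_mono_set hIu''
          · exact Filter.Eventually.of_forall (fun s => abs_nonneg _)
          · apply HasSubset.Subset.eventuallyLE
            intro s hs
            exact ⟨(le_min hx.1 ht.1).trans hs.1.le, hs.2.trans (max_le hx.2 ht.2)⟩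
  -- FTC on [y, z]
  have hftc2 : ∫ t in y..z, u' t = u z - u y := by
    apply integral_eq_sub_of_hasDeriv_right
    · exact hu.mono (uIcc_subset_Icc hyab hzab)
    · intro s hs
      have hsab : s ∈ Ioo a b := ⟨lt_of_le_of_lt (le_min hyab.1 hzab.1) hs.1,
        lt_of_lt_of_le hs.2 (max_le hyab.2 hzab.2)⟩
      exact ((hd' s (Ioo_subset_Icc_self hsab)).hasDerivAt
        (Icc_mem_nhds hsab.1 hsab.2)).hasDerivWithinAt
    · exact (hU'.mono (uIcc_subset_Icc hyab hzab)).intervalIntegrable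
  have hyzI : IntervalIntegrable u' volume y z := (hU'.mono (uIcc_subset_Icc hyab hzab)).intervalIntegrable
  have hid : ∫ t in y..z, (u' t - u' x) = (u z - u y) - (z - y) * u' x := by
    rw [intervalIntegral.integral_sub hyzI intervalIntegrable_const, hftc2,
      intervalIntegral.integral_const, smul_eq_mul]
  have hbd : |∫ t in y..z, (u' t - u' x)| ≤ M * |z - y| := by
    rw [← Real.norm_eq_abs]
    apply intervalIntegral.norm_integral_le_of_norm_le_const
    intro s hs
    have hsJ : s ∈ Icc c (c + h) := by
      rcases hs with ⟨h1, h2⟩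
      constructor
      · exact (le_min hyJ.1 (hyJ.1.trans (by linarith [hyz] : y ≤ z))).trans h1.le
      · exact h2.trans (max_le (hyJ.2.trans (by linarith)) hzJ.2)
    rw [Real.norm_eq_abs]
    exact key1 s hsJ
  have hzy : h/3 ≤ z - y := by linarith
  have hzy0 : 0 < z - y := by linarith
  rw [abs_of_pos hzy0, hid] at hbd
  -- |u' x| * (z - y) ≤ |u y| + |u z| + M * (z-y)
  have hux : (z - y) * |u' x| ≤ |u y| + |u z| + M * (z - y) := by
    have h1 : |(z - y) * u' x| ≤ |u z - u y| + M * (z - y) := by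
      calc |(z - y) * u' x| = |(u z - u y) - ((u z - u y) - (z - y) * u' x)| := by
            rw [show (u z - u y) - ((u z - u y) - (z - y) * u' x) = (z-y) * u' x by ring]
        _ ≤ |u z - u y| + |(u z - u y) - (z - y) * u' x| := abs_sub _ _
        _ ≤ |u z - u y| + M * (z - y) := by linarith [hbd]
    have h3 : |u z - u y| ≤ |u z| + |u y| := abs_sub _ _
    have h4 : |(z - y) * u' x| = (z - y) * |u' x| := by
      rw [abs_mul, abs_of_pos hzy0]
    linarith [h1, h3, h4.symm.le]
  set S : ℝ := |u y| + |u z| with hS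
  have hS0 : 0 ≤ S := by positivity
  have hfin : |u' x| ≤ S * (3/h) + M := by
    have h5 : |u' x| ≤ (S + M * (z - y)) / (z - y) := by
      rw [le_div_iff₀ hzy0]
      nlinarith [hux]
    have h6 : (S + M * (z - y)) / (z - y) = S / (z-y) + M := by
      field_simp
    have h7 : S / (z - y) ≤ S / (h/3) :=
      div_le_div_of_nonneg_left hS0 (by linarith) hzy
    have h8 : S / (h/3) = S * (3/h) := by
      field_simp
    linarith
  -- combine
  have hJsum : (∫ t in Icc c (c + h/3), |u t|) + (∫ t in Icc (c + 2*h/3) (c + h), |u t|)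
      ≤ ∫ t in Icc c (c + h), |u t| := by
    have hdisj : Disjoint (Icc c (c + h/3)) (Icc (c + 2*h/3) (c + h)) := by
      apply Set.disjoint_left.2
      intro t ht1 ht2
      have := ht1.2; have := ht2.1; linarith
    rw [← setIntegral_union hdisj measurableSet_Icc (hIu.mono_set h1sub) (hIu.mono_set h2sub)]
    apply setIntegral_mono_set hIu (Filter.Eventually.of_forall (fun s => abs_nonneg _))
    exact HasSubset.Subset.eventuallyLE (union_subset h1sub h2sub)
  have hy2 : |u y| ≤ 3/h * ∫ t in Icc c (c + h/3), |u t| := by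
    calc |u y| = 3/h * (h/3 * |u y|) := by field_simp
      _ ≤ 3/h * ∫ t in Icc c (c + h/3), |u t| :=
        mul_le_mul_of_nonneg_left hy1 (by positivity)
  have hz2 : |u z| ≤ 3/h * ∫ t in Icc (c + 2*h/3) (c + h), |u t| := by
    calc |u z| = 3/h * (h/3 * |u z|) := by field_simp
      _ ≤ 3/h * ∫ t in Icc (c + 2*h/3) (c + h), |u t| :=
        mul_le_mul_of_nonneg_left hz1 (by positivity)
  have h10 : S ≤ 3/h * ∫ t in Icc c (c + h), |u t| := by
    calc S ≤ 3/h * ((∫ t in Icc c (c + h/3), |u t|)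
          + (∫ t in Icc (c + 2*h/3) (c + h), |u t|)) := by
          rw [mul_add]; exact add_le_add hy2 hz2
      _ ≤ 3/h * ∫ t in Icc c (c + h), |u t| :=
          mul_le_mul_of_nonneg_left hJsum (by positivity)
  have h9 : S * (3/h) ≤ 9/h^2 * ∫ t in Icc c (c + h), |u t| := by
    calc S * (3/h) ≤ (3/h * ∫ t in Icc c (c + h), |u t|) * (3/h) :=
          mul_le_mul_of_nonneg_right h10 (by positivity)
      _ = 9/h^2 * ∫ t in Icc c (c + h), |u t| := by field_simp; ring
  exact le_trans hfin (add_le_add_left h9 M)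

lemma my_fubini (a b h : ℝ) (hh : 0 < h) (hhb : h ≤ b - a) (F : ℝ → ℝ≥0∞) (hF : Measurable F) :
    ∫⁻ x in Ioo a b, ∫⁻ t in Icc (min x (b-h)) (min x (b-h) + h), F t
      ≤ ENNReal.ofReal (2*h) * ∫⁻ t in Ioo a b, F t := by
  set S : Set (ℝ×ℝ) := {q | min q.1 (b-h) ≤ q.2 ∧ q.2 ≤ min q.1 (b-h) + h} with hSdef
  have hSm : MeasurableSet S := by
    have : S = {q : ℝ×ℝ | min q.1 (b-h) ≤ q.2} ∩ {q : ℝ×ℝ | q.2 ≤ min q.1 (b-h) + h} := by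
      ext q; simp [hSdef, mem_setOf_eq]
    rw [this]
    exact ((isClosed_le (continuous_fst.min continuous_const) continuous_snd).inter
      (isClosed_le continuous_snd ((continuous_fst.min continuous_const).add
        continuous_const))).measurableSet
  have step1 : ∀ x : ℝ, (∫⁻ t in Icc (min x (b-h)) (min x (b-h) + h), F t)
      = ∫⁻ t, S.indicator (fun q => F q.2) (x, t) := by
    intro x
    rw [← lintegral_indicator measurableSet_Icc]
    apply lintegral_congr
    intro t
    by_cases ht : t ∈ Icc (min x (b-h)) (min x (b-h) + h)
    · simp only [Set.indicator_of_mem ht]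
      rw [Set.indicator_of_mem (show (x, t) ∈ S by simpa [hSdef, mem_setOf_eq] using ht)]
    · simp only [Set.indicator_of_notMem ht]
      rw [Set.indicator_of_notMem (show (x, t) ∉ S by simpa [hSdef, mem_setOf_eq] using ht)]
  calc ∫⁻ x in Ioo a b, ∫⁻ t in Icc (min x (b-h)) (min x (b-h) + h), F t
      = ∫⁻ x in Ioo a b, ∫⁻ t, S.indicator (fun q => F q.2) (x, t) := by
        exact lintegral_congr step1
    _ = ∫⁻ t, ∫⁻ x in Ioo a b, S.indicator (fun q => F q.2) (x, t) := by
        apply lintegral_lintegral_swap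
        exact ((hF.comp measurable_snd).indicator hSm).aemeasurable
    _ ≤ ∫⁻ t, (Icc a b).indicator (fun s => ENNReal.ofReal (2*h) * F s) t := by
        apply lintegral_mono
        intro t
        have hTm : MeasurableSet {x : ℝ | (x, t) ∈ S} :=
          hSm.preimage (measurable_id.prodMk measurable_const)
        have hGeq : ∀ x : ℝ, S.indicator (fun q => F q.2) (x, t)
            = ({x : ℝ | (x, t) ∈ S}).indicator (fun _ => F t) x := by
          intro x
          by_cases hx : (x, t) ∈ S
          · rw [Set.indicator_of_mem hx,
              Set.indicator_of_mem (show x ∈ {x' : ℝ | (x', t) ∈ S} from hx)]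
          · rw [Set.indicator_of_notMem hx,
              Set.indicator_of_notMem (show x ∉ {x' : ℝ | (x', t) ∈ S} from hx)]
        simp_rw [hGeq]
        rw [lintegral_indicator hTm, setLIntegral_const, Measure.restrict_apply hTm]
        by_cases ht : t ∈ Icc a b
        · rw [indicator_of_mem ht]
          have hsub2 : {x : ℝ | (x, t) ∈ S} ∩ Ioo a b ⊆ Icc (t-h) t ∪ Icc (b-h) b := by
            intro x ⟨hxS, hxI⟩
            rcases hxS with ⟨h1, h2⟩
            by_cases hxb : x ≤ b - h
            · left
              rw [min_eq_left hxb] at h1 h2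
              exact ⟨by linarith, h1⟩
            · right
              exact ⟨(not_le.1 hxb).le, hxI.2.le⟩
          have hvol : volume ({x : ℝ | (x, t) ∈ S} ∩ Ioo a b) ≤ ENNReal.ofReal (2*h) := by
            calc volume ({x : ℝ | (x, t) ∈ S} ∩ Ioo a b)
                ≤ volume (Icc (t-h) t ∪ Icc (b-h) b) := measure_mono hsub2
              _ ≤ volume (Icc (t-h) t) + volume (Icc (b-h) b) := measure_union_le _ _
              _ = ENNReal.ofReal (2*h) := by
                  rw [Real.volume_Icc, Real.volume_Icc, ← ENNReal.ofReal_add (by linarith)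
                    (by linarith)]
                  congr 1; ring
          calc F t * volume ({x : ℝ | (x, t) ∈ S} ∩ Ioo a b)
              ≤ F t * ENNReal.ofReal (2*h) := mul_le_mul_right hvol _
            _ = ENNReal.ofReal (2*h) * F t := mul_comm _ _
        · have hempty : {x : ℝ | (x, t) ∈ S} ∩ Ioo a b = ∅ := by
            ext x
            simp only [mem_inter_iff, mem_setOf_eq, mem_Ioo, mem_empty_iff_false, iff_false]
            rintro ⟨⟨h1, h2⟩, hxa, hxb⟩
            apply ht
            constructor
            · exact le_trans (le_min hxa.le (by linarith)) h1
            · exact le_trans h2 (by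
                have : min x (b-h) ≤ b - h := min_le_right _ _
                linarith)
          rw [hempty]
          simp
    _ = ENNReal.ofReal (2*h) * ∫⁻ t in Ioo a b, F t := by
        rw [lintegral_indicator measurableSet_Icc, lintegral_const_mul _ hF,
          Measure.restrict_congr_set Ioo_ae_eq_Icc]

lemma my_avg (a b h : ℝ) (hh : 0 < h) (hhb : h ≤ b - a) (p : ℝ) (hp : 1 ≤ p)
    (f : ℝ → ℝ) (hf : Continuous f) :
    (∫⁻ x in Ioo a b,
        (∫⁻ t in Icc (min x (b-h)) (min x (b-h) + h), ENNReal.ofReal |f t|) ^ p) ^ (1/p)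
      ≤ ENNReal.ofReal (2*h) * (∫⁻ t in Ioo a b, ENNReal.ofReal |f t| ^ p) ^ (1/p) := by
  have hp0 : 0 < p := lt_of_lt_of_le one_pos hp
  set F : ℝ → ℝ≥0∞ := fun t => ENNReal.ofReal |f t| with hFdef
  have hFm : Measurable F := (hf.abs.measurable).ennreal_ofReal
  have hFpm : Measurable (fun t => F t ^ p) := hFm.pow_const p
  have holder : ∀ x : ℝ, (∫⁻ t in Icc (min x (b-h)) (min x (b-h) + h), F t) ^ p
      ≤ ENNReal.ofReal h ^ (p-1) * ∫⁻ t in Icc (min x (b-h)) (min x (b-h) + h), F t ^ p := by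
    intro x
    set c := min x (b-h) with hc
    have hvol : volume (Icc c (c+h)) = ENNReal.ofReal h := by
      rw [Real.volume_Icc]; congr 1; ring
    rcases eq_or_lt_of_le hp with heq | hp1
    · rw [← heq]
      simp
    · have hpq : p.HolderConjugate (p/(p-1)) := Real.HolderConjugate.conjExponent hp1
      have H := ENNReal.lintegral_mul_le_Lp_mul_Lq (volume.restrict (Icc c (c+h))) hpq
        hFm.aemeasurable (aemeasurable_const (b := (1:ℝ≥0∞)))
      simp only [Pi.mul_apply, mul_one, ENNReal.one_rpow, lintegral_const,
        Measure.restrict_apply MeasurableSet.univ, univ_inter, one_mul] at H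
      rw [hvol] at H
      have H2 := ENNReal.rpow_le_rpow H hp0.le
      rw [ENNReal.mul_rpow_of_nonneg _ _ hp0.le, ← ENNReal.rpow_mul, ← ENNReal.rpow_mul,
        one_div_mul_cancel hp0.ne', ENNReal.rpow_one] at H2
      have hq : (p/(p-1))⁻¹ * p = p - 1 := by
        field_simp
      rw [one_div, hq] at H2
      calc (∫⁻ t in Icc c (c+h), F t) ^ p
          ≤ (∫⁻ t in Icc c (c+h), F t ^ p) * ENNReal.ofReal h ^ (p-1) := H2
        _ = ENNReal.ofReal h ^ (p-1) * ∫⁻ t in Icc c (c+h), F t ^ p := mul_comm _ _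
  calc (∫⁻ x in Ioo a b,
        (∫⁻ t in Icc (min x (b-h)) (min x (b-h) + h), F t) ^ p) ^ (1/p)
      ≤ (∫⁻ x in Ioo a b, ENNReal.ofReal h ^ (p-1)
          * ∫⁻ t in Icc (min x (b-h)) (min x (b-h) + h), F t ^ p) ^ (1/p) := by
        apply ENNReal.rpow_le_rpow _ (by positivity)
        exact lintegral_mono (fun x => holder x)
    _ = (ENNReal.ofReal h ^ (p-1) * ∫⁻ x in Ioo a b,
          ∫⁻ t in Icc (min x (b-h)) (min x (b-h) + h), F t ^ p) ^ (1/p) := by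
        rw [lintegral_const_mul' _ _ (by
          exact ENNReal.rpow_ne_top_of_nonneg (by linarith) ENNReal.ofReal_ne_top)]
    _ ≤ (ENNReal.ofReal h ^ (p-1) * (ENNReal.ofReal (2*h)
          * ∫⁻ t in Ioo a b, F t ^ p)) ^ (1/p) := by
        apply ENNReal.rpow_le_rpow _ (by positivity)
        exact mul_le_mul_right (my_fubini a b h hh hhb _ hFpm) _
    _ ≤ ((ENNReal.ofReal (2*h)) ^ (p-1) * (ENNReal.ofReal (2*h)
          * ∫⁻ t in Ioo a b, F t ^ p)) ^ (1/p) := by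
        apply ENNReal.rpow_le_rpow _ (by positivity)
        apply mul_le_mul_left
        exact ENNReal.rpow_le_rpow (ENNReal.ofReal_le_ofReal (by linarith)) (by linarith)
    _ = ((ENNReal.ofReal (2*h)) ^ p * ∫⁻ t in Ioo a b, F t ^ p) ^ (1/p) := by
        rw [← mul_assoc]
        congr 2
        nth_rewrite 2 [← ENNReal.rpow_one (ENNReal.ofReal (2*h))]
        rw [← ENNReal.rpow_add _ _ (by positivity) ENNReal.ofReal_ne_top]
        norm_num
    _ = ENNReal.ofReal (2*h) * (∫⁻ t in Ioo a b, F t ^ p) ^ (1/p) := by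
        rw [ENNReal.mul_rpow_of_nonneg _ _ (by positivity), ← ENNReal.rpow_mul,
          mul_one_div_cancel hp0.ne', ENNReal.rpow_one]

lemma my_meas (b h : ℝ) (F : ℝ → ℝ≥0∞) (hF : Measurable F) :
    Measurable (fun x : ℝ => ∫⁻ t in Icc (min x (b-h)) (min x (b-h) + h), F t) := by
  set S : Set (ℝ×ℝ) := {q | min q.1 (b-h) ≤ q.2 ∧ q.2 ≤ min q.1 (b-h) + h} with hSdef
  have hSm : MeasurableSet S := by
    have : S = {q : ℝ×ℝ | min q.1 (b-h) ≤ q.2} ∩ {q : ℝ×ℝ | q.2 ≤ min q.1 (b-h) + h} := by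
      ext q; simp [hSdef, mem_setOf_eq]
    rw [this]
    exact ((isClosed_le (continuous_fst.min continuous_const) continuous_snd).inter
      (isClosed_le continuous_snd ((continuous_fst.min continuous_const).add
        continuous_const))).measurableSet
  have step1 : ∀ x : ℝ, (∫⁻ t in Icc (min x (b-h)) (min x (b-h) + h), F t)
      = ∫⁻ t, S.indicator (fun q => F q.2) (x, t) := by
    intro x
    rw [← lintegral_indicator measurableSet_Icc]
    apply lintegral_congr
    intro t
    by_cases ht : t ∈ Icc (min x (b-h)) (min x (b-h) + h)
    · simp only [Set.indicator_of_mem ht]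
      rw [Set.indicator_of_mem (show (x, t) ∈ S by simpa [hSdef, mem_setOf_eq] using ht)]
    · simp only [Set.indicator_of_notMem ht]
      rw [Set.indicator_of_notMem (show (x, t) ∉ S by simpa [hSdef, mem_setOf_eq] using ht)]
  simp_rw [step1]
  apply Measurable.lintegral_prod_right (f := fun (x t : ℝ) => S.indicator (fun q => F q.2) (x, t))
  exact ((hF.comp measurable_snd).indicator hSm).comp (measurable_fst.prodMk measurable_snd)

theorem deriv_Lp_interpolation (a b : ℝ) (hab : a < b) (p : ℝ) (hp : 1 ≤ p) (u u' u'' : ℝ → ℝ)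
    (hu' : ∀ x ∈ Set.Icc a b, HasDerivWithinAt u (u' x) (Set.Icc a b) x)
    (hu'' : ∀ x ∈ Set.Icc a b, HasDerivWithinAt u' (u'' x) (Set.Icc a b) x)
    (hcont : ContinuousOn u'' (Set.Icc a b)) :
    ∀ ε : ℝ, 0 < ε → ε ≤ b - a →
      (∫ t in Set.Ioo a b, |u' t| ^ p) ^ (1 / p) ≤
        ε * (∫ t in Set.Ioo a b, |u'' t| ^ p) ^ (1 / p) +
          36 * ε⁻¹ * (∫ t in Set.Ioo a b, |u t| ^ p) ^ (1 / p) := by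
  intro ε hε hεb
  have hp0 : 0 < p := lt_of_lt_of_le one_pos hp
  set h : ℝ := ε / 2 with hhdef
  have hh : 0 < h := by positivity
  have hhb : h ≤ b - a := by simp only [hhdef]; linarith
  -- continuity of u, u'
  have hu'cont : ContinuousOn u' (Icc a b) := fun x hx => (hu'' x hx).continuousWithinAt
  have hucont : ContinuousOn u (Icc a b) := fun x hx => (hu' x hx).continuousWithinAt
  -- continuous global extensions
  set π : ℝ → ℝ := fun t => max a (min t b) with hπdef
  have hπ : Continuous π := continuous_const.max (continuous_id.min continuous_const)
  have hπmem : ∀ t, π t ∈ Icc a b := fun t => ⟨le_max_left _ _, max_le hab.le (min_le_right _ _)⟩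
  have hπid : ∀ t ∈ Icc a b, π t = t := by
    intro t ht
    simp only [hπdef]
    rw [min_eq_left ht.2, max_eq_right ht.1]
  set U : ℝ → ℝ := u ∘ π with hUdef
  set V : ℝ → ℝ := u' ∘ π with hVdef
  set W : ℝ → ℝ := u'' ∘ π with hWdef
  have hUc : Continuous U := hucont.comp_continuous hπ hπmem
  have hVc : Continuous V := hu'cont.comp_continuous hπ hπmem
  have hWc : Continuous W := hcont.comp_continuous hπ hπmem
  have hUe : ∀ t ∈ Icc a b, U t = u t := fun t ht => by simp [hUdef, hπid t ht]
  have hVe : ∀ t ∈ Icc a b, V t = u' t := fun t ht => by simp [hVdef, hπid t ht]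
  have hWe : ∀ t ∈ Icc a b, W t = u'' t := fun t ht => by simp [hWdef, hπid t ht]
  -- derivatives of the extensions
  have hdU : ∀ x ∈ Icc a b, HasDerivWithinAt U (V x) (Icc a b) x := by
    intro x hx
    rw [hVe x hx]
    exact (hu' x hx).congr hUe (hUe x hx)
  have hdV : ∀ x ∈ Icc a b, HasDerivWithinAt V (W x) (Icc a b) x := by
    intro x hx
    rw [hWe x hx]
    exact (hu'' x hx).congr hVe (hVe x hx)
  -- the lintegral quantities
  set LU : ℝ≥0∞ := ∫⁻ t in Ioo a b, ENNReal.ofReal |U t| ^ p with hLU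
  set LV : ℝ≥0∞ := ∫⁻ t in Ioo a b, ENNReal.ofReal |V t| ^ p with hLV
  set LW : ℝ≥0∞ := ∫⁻ t in Ioo a b, ENNReal.ofReal |W t| ^ p with hLW
  -- real integrals equal toReal of lintegrals
  have hconv : ∀ f : ℝ → ℝ, Continuous f →
      ENNReal.ofReal (∫ t in Ioo a b, |f t| ^ p) = ∫⁻ t in Ioo a b, ENNReal.ofReal |f t| ^ p := by
    intro f hf
    have hint : IntegrableOn (fun t => |f t| ^ p) (Ioo a b) :=
      ((hf.abs.continuousOn.rpow_const (fun x _ => Or.inr hp0.le)).integrableOn_Icc).mono_set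
        Ioo_subset_Icc_self
    rw [ofReal_integral_eq_lintegral_ofReal hint
      (Filter.Eventually.of_forall (fun t => Real.rpow_nonneg (abs_nonneg _) p))]
    apply lintegral_congr
    intro t
    rw [ENNReal.ofReal_rpow_of_nonneg (abs_nonneg _) hp0.le]
  -- window function bounds
  set A : ℝ → ℝ≥0∞ := fun x => ∫⁻ t in Icc (min x (b-h)) (min x (b-h) + h), ENNReal.ofReal |U t|
    with hA
  set B : ℝ → ℝ≥0∞ := fun x => ∫⁻ t in Icc (min x (b-h)) (min x (b-h) + h), ENNReal.ofReal |W t|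
    with hB
  have hAm : Measurable A := my_meas b h _ hUc.abs.measurable.ennreal_ofReal
  have hBm : Measurable B := my_meas b h _ hWc.abs.measurable.ennreal_ofReal
  set f1 : ℝ → ℝ≥0∞ := fun x => ENNReal.ofReal (9 / h^2) * A x with hf1
  have hf1m : Measurable f1 := hAm.const_mul _
  -- pointwise estimate
  have hptw : ∀ x ∈ Ioo a b, ENNReal.ofReal |V x| ≤ f1 x + B x := by
    intro x hx
    have hac : a ≤ min x (b-h) := le_min hx.1.le (by linarith)
    have hcb : min x (b-h) + h ≤ b := by
      have := min_le_right x (b-h); linarith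
    have hxmem : x ∈ Icc (min x (b-h)) (min x (b-h) + h) := by
      constructor
      · exact min_le_left _ _
      · rcases le_total x (b-h) with hle | hle
        · rw [min_eq_left hle]; linarith
        · rw [min_eq_right hle]; linarith [hx.2.le]
    have hpt := my_ptwise a b U V W hUc.continuousOn hVc.continuousOn hWc.continuousOn
      hdV h hh (min x (b-h)) hac hcb x hxmem hdU
    calc ENNReal.ofReal |V x|
        ≤ ENNReal.ofReal (9 / h ^ 2 * (∫ t in Icc (min x (b-h)) (min x (b-h) + h), |U t|)
          + ∫ t in Icc (min x (b-h)) (min x (b-h) + h), |W t|) := ENNReal.ofReal_le_ofReal hpt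
      _ = f1 x + B x := by
          rw [ENNReal.ofReal_add (by positivity) (setIntegral_nonneg measurableSet_Icc
            (fun t _ => abs_nonneg _)), ENNReal.ofReal_mul (by positivity)]
          congr 1
          · congr 1
            rw [ofReal_integral_eq_lintegral_ofReal
              (hUc.abs.integrableOn_Icc)
              (Filter.Eventually.of_forall (fun t => abs_nonneg _))]
          · rw [ofReal_integral_eq_lintegral_ofReal
              (hWc.abs.integrableOn_Icc)
              (Filter.Eventually.of_forall (fun t => abs_nonneg _))]
  -- main chain in ℝ≥0∞
  have main : LV ^ (1/p) ≤ ENNReal.ofReal ε * LW ^ (1/p)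
      + ENNReal.ofReal (36 * ε⁻¹) * LU ^ (1/p) := by
    have step1 : LV ^ (1/p) ≤ (∫⁻ x in Ioo a b, (f1 x + B x) ^ p) ^ (1/p) := by
      apply ENNReal.rpow_le_rpow _ (by positivity)
      apply setLIntegral_mono ((hf1m.add hBm).pow_const p)
      intro x hx
      exact ENNReal.rpow_le_rpow (hptw x hx) hp0.le
    have step2 : (∫⁻ x in Ioo a b, (f1 x + B x) ^ p) ^ (1/p)
        ≤ (∫⁻ x in Ioo a b, f1 x ^ p) ^ (1/p) + (∫⁻ x in Ioo a b, B x ^ p) ^ (1/p) := by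
      exact ENNReal.lintegral_Lp_add_le hf1m.aemeasurable hBm.aemeasurable hp
    have stepB : (∫⁻ x in Ioo a b, B x ^ p) ^ (1/p) ≤ ENNReal.ofReal ε * LW ^ (1/p) := by
      have := my_avg a b h hh hhb p hp W hWc
      rw [show 2 * h = ε by rw [hhdef]; ring] at this
      exact this
    have stepA : (∫⁻ x in Ioo a b, f1 x ^ p) ^ (1/p)
        ≤ ENNReal.ofReal (36 * ε⁻¹) * LU ^ (1/p) := by
      have hpull : (∫⁻ x in Ioo a b, f1 x ^ p) ^ (1/p)
          = ENNReal.ofReal (9 / h^2) * (∫⁻ x in Ioo a b, A x ^ p) ^ (1/p) := by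
        simp_rw [hf1, ENNReal.mul_rpow_of_nonneg _ _ hp0.le]
        rw [lintegral_const_mul' _ _ (ENNReal.rpow_ne_top_of_nonneg hp0.le
          ENNReal.ofReal_ne_top)]
        rw [ENNReal.mul_rpow_of_nonneg _ _ (by positivity : (0:ℝ) ≤ 1/p), ← ENNReal.rpow_mul,
          mul_one_div_cancel hp0.ne', ENNReal.rpow_one]
      rw [hpull]
      calc ENNReal.ofReal (9 / h^2) * (∫⁻ x in Ioo a b, A x ^ p) ^ (1/p)
          ≤ ENNReal.ofReal (9 / h^2) * (ENNReal.ofReal (2*h) * LU ^ (1/p)) :=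
            mul_le_mul_right (my_avg a b h hh hhb p hp U hUc) _
        _ = ENNReal.ofReal (36 * ε⁻¹) * LU ^ (1/p) := by
            rw [← mul_assoc, ← ENNReal.ofReal_mul (by positivity)]
            congr 2
            rw [hhdef]
            field_simp
            ring
    calc LV ^ (1/p) ≤ (∫⁻ x in Ioo a b, f1 x ^ p) ^ (1/p)
          + (∫⁻ x in Ioo a b, B x ^ p) ^ (1/p) := step1.trans step2
      _ ≤ ENNReal.ofReal (36 * ε⁻¹) * LU ^ (1/p) + ENNReal.ofReal ε * LW ^ (1/p) :=
          add_le_add stepA stepB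
      _ = ENNReal.ofReal ε * LW ^ (1/p) + ENNReal.ofReal (36 * ε⁻¹) * LU ^ (1/p) := add_comm _ _
  -- convert back to real integrals
  have hRV : (∫ t in Ioo a b, |u' t| ^ p) = (∫ t in Ioo a b, |V t| ^ p) :=
    setIntegral_congr_fun measurableSet_Ioo
      (fun t ht => by rw [hVe t (Ioo_subset_Icc_self ht)])
  have hRW : (∫ t in Ioo a b, |u'' t| ^ p) = (∫ t in Ioo a b, |W t| ^ p) :=
    setIntegral_congr_fun measurableSet_Ioo
      (fun t ht => by rw [hWe t (Ioo_subset_Icc_self ht)])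
  have hRU : (∫ t in Ioo a b, |u t| ^ p) = (∫ t in Ioo a b, |U t| ^ p) :=
    setIntegral_congr_fun measurableSet_Ioo
      (fun t ht => by rw [hUe t (Ioo_subset_Icc_self ht)])
  have hcV := hconv V hVc
  have hcW := hconv W hWc
  have hcU := hconv U hUc
  have hRV0 : 0 ≤ ∫ t in Ioo a b, |V t| ^ p :=
    setIntegral_nonneg measurableSet_Ioo (fun t _ => Real.rpow_nonneg (abs_nonneg _) _)
  have hRW0 : 0 ≤ ∫ t in Ioo a b, |W t| ^ p :=
    setIntegral_nonneg measurableSet_Ioo (fun t _ => Real.rpow_nonneg (abs_nonneg _) _)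
  have hRU0 : 0 ≤ ∫ t in Ioo a b, |U t| ^ p :=
    setIntegral_nonneg measurableSet_Ioo (fun t _ => Real.rpow_nonneg (abs_nonneg _) _)
  have hLVfin : LV ≠ ⊤ := by rw [hLV, ← hcV]; exact ENNReal.ofReal_ne_top
  have hLWfin : LW ≠ ⊤ := by rw [hLW, ← hcW]; exact ENNReal.ofReal_ne_top
  have hLUfin : LU ≠ ⊤ := by rw [hLU, ← hcU]; exact ENNReal.ofReal_ne_top
  rw [hRV, hRW, hRU]
  have htR : ∀ (f : ℝ → ℝ) (L : ℝ≥0∞), (0 ≤ ∫ t in Ioo a b, |f t| ^ p) →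
      ENNReal.ofReal (∫ t in Ioo a b, |f t| ^ p) = L →
      (∫ t in Ioo a b, |f t| ^ p) ^ (1/p) = (L ^ (1/p)).toReal := by
    intro f L h0 hL
    rw [← hL, ← ENNReal.toReal_rpow, ENNReal.toReal_ofReal h0]
  rw [htR V LV hRV0 hcV, htR W LW hRW0 hcW, htR U LU hRU0 hcU]
  have hfinW : ENNReal.ofReal ε * LW ^ (1/p) ≠ ⊤ :=
    ENNReal.mul_ne_top ENNReal.ofReal_ne_top
      (ENNReal.rpow_ne_top_of_nonneg (by positivity) hLWfin)
  have hfinU : ENNReal.ofReal (36 * ε⁻¹) * LU ^ (1/p) ≠ ⊤ :=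
    ENNReal.mul_ne_top ENNReal.ofReal_ne_top
      (ENNReal.rpow_ne_top_of_nonneg (by positivity) hLUfin)
  calc (LV ^ (1/p)).toReal
      ≤ (ENNReal.ofReal ε * LW ^ (1/p) + ENNReal.ofReal (36 * ε⁻¹) * LU ^ (1/p)).toReal :=
        ENNReal.toReal_mono (by exact ENNReal.add_ne_top.2 ⟨hfinW, hfinU⟩) main
    _ = ε * (LW ^ (1/p)).toReal + 36 * ε⁻¹ * (LU ^ (1/p)).toReal := by
        rw [ENNReal.toReal_add hfinW hfinU, ENNReal.toReal_mul, ENNReal.toReal_mul,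
          ENNReal.toReal_ofReal hε.le, ENNReal.toReal_ofReal (by positivity)]
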